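/- If P is a parallelohedron in ℝⁿ tiling by a lattice Λ, then the chromatic number of the unit distance graph of (ℝⁿ, ‖·‖_P) is at most 2ⁿ: the 2ⁿ sets A_H = ⋃_{λ∈H} B_P(λ, 1/2), for H a coset of Λ in (1/2)Λ, partition ℝⁿ and each avoids distance 1. -/

import Mathlib

open MeasureTheory Filter Set Pointwise
open Topology

noncomputable def box (n : ℕ) (R : ℝ) : Set (Fin n → ℝ) := {x | ∀ i, |x i| ≤ R}

noncomputable def density (n : ℕ) (A : Set (Fin n → ℝ)) : ℝ :=
  Filter.limsup (fun R : ℝ =>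
    (volume (A ∩ box n R)).toReal / (volume (box n R)).toReal) Filter.atTop

def AvoidsOne (n : ℕ) (N : (Fin n → ℝ) → ℝ) (A : Set (Fin n → ℝ)) : Prop :=
  ∀ x ∈ A, ∀ y ∈ A, N (x - y) ≠ 1

noncomputable def m1 (n : ℕ) (N : (Fin n → ℝ) → ℝ) : ℝ :=
  sSup {d : ℝ | ∃ A : Set (Fin n → ℝ), MeasurableSet A ∧ AvoidsOne n N A ∧ d = density n A}

noncomputable def polyNorm (n : ℕ) (P : Set (Fin n → ℝ)) (x : Fin n → ℝ) : ℝ :=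
  sInf {l : ℝ | 0 ≤ l ∧ x ∈ l • P}

def IsSymmPolytope (n : ℕ) (P : Set (Fin n → ℝ)) : Prop :=
  Convex ℝ P ∧ (∀ x ∈ P, -x ∈ P) ∧ ∃ F : Finset (Fin n → ℝ), P = convexHull ℝ (↑F : Set (Fin n → ℝ))

def TilesBy (n : ℕ) (P : Set (Fin n → ℝ)) (Λ : Set (Fin n → ℝ)) : Prop :=
  (⋃ l ∈ Λ, (l +ᵥ P)) = Set.univ ∧
  (Λ.Pairwise fun a b => interior (a +ᵥ P) ∩ interior (b +ᵥ P) = ∅)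

section AuxLemmas

lemma polyNorm_eq_gauge {n : ℕ} {P : Set (Fin n → ℝ)} (h0 : (0 : Fin n → ℝ) ∈ P) :
    polyNorm n P = gauge P := by
  funext x
  rcases eq_or_ne x 0 with rfl | hx
  · rw [gauge_zero]
    have hA : {l : ℝ | 0 ≤ l ∧ (0 : Fin n → ℝ) ∈ l • P} = Set.Ici 0 := by
      ext l
      simp only [Set.mem_setOf_eq, Set.mem_Ici, and_iff_left_iff_imp]
      intro hl
      exact ⟨0, h0, smul_zero l⟩
    rw [polyNorm, hA, csInf_Ici]
  · have hA : {l : ℝ | 0 ≤ l ∧ x ∈ l • P} = {r : ℝ | 0 < r ∧ x ∈ r • P} := by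
      ext l
      constructor
      · rintro ⟨hl, hm⟩
        refine ⟨lt_of_le_of_ne hl ?_, hm⟩
        rintro rfl
        rw [Set.zero_smul_set ⟨0, h0⟩] at hm
        exact hx (by simpa using hm)
      · rintro ⟨hl, hm⟩; exact ⟨hl.le, hm⟩
    rw [polyNorm, hA]; rfl

lemma lattice_mem_iff {n : ℕ} (b : Module.Basis (Fin n) ℝ (Fin n → ℝ)) (v : Fin n → ℝ) :
    v ∈ AddSubgroup.closure (Set.range b) ↔ ∃ z : Fin n → ℤ, v = ∑ i, z i • b i := by
  constructor
  · intro hv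
    let A : AddSubgroup (Fin n → ℝ) :=
      { carrier := {v | ∃ z : Fin n → ℤ, v = ∑ i, z i • b i}
        zero_mem' := ⟨0, by simp⟩
        add_mem' := by
          rintro u w ⟨z₁, rfl⟩ ⟨z₂, rfl⟩
          exact ⟨z₁ + z₂, by simp [add_smul, Finset.sum_add_distrib]⟩
        neg_mem' := by
          rintro u ⟨z, rfl⟩
          exact ⟨-z, by simp [neg_smul, Finset.sum_neg_distrib]⟩ }
    have : AddSubgroup.closure (Set.range b) ≤ A := by
      rw [AddSubgroup.closure_le]
      rintro _ ⟨j, rfl⟩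
      show ∃ z : Fin n → ℤ, b j = ∑ i, z i • b i
      exact ⟨Pi.single j 1, by simp [Pi.single_apply, ite_smul]⟩
    exact this hv
  · rintro ⟨z, rfl⟩
    exact AddSubgroup.sum_mem _ fun i _ =>
      AddSubgroup.zsmul_mem _ (AddSubgroup.subset_closure (Set.mem_range_self i)) (z i)

lemma lattice_finite {n : ℕ} (b : Module.Basis (Fin n) ℝ (Fin n → ℝ)) (K : ℝ) :
    {v : Fin n → ℝ | (∃ z : Fin n → ℤ, v = ∑ i, z i • b i) ∧ ‖v‖ ≤ K}.Finite := by
  classical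
  set T := LinearMap.toContinuousLinearMap (b.equivFun.toLinearMap)
  set M : ℤ := ⌈‖T‖ * K⌉
  have key : {v : Fin n → ℝ | (∃ z : Fin n → ℤ, v = ∑ i, z i • b i) ∧ ‖v‖ ≤ K} ⊆
      (fun z : Fin n → ℤ => ∑ i, z i • b i) '' {z | ∀ i, z i ∈ Set.Icc (-M) M} := by
    rintro v ⟨⟨z, rfl⟩, hv⟩
    refine ⟨z, fun i => ?_, rfl⟩
    have hveq : b.equivFun (∑ i, z i • b i) = fun i => (z i : ℝ) := by
      have : (∑ i, z i • b i) = b.equivFun.symm (fun i => (z i : ℝ)) := by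
        rw [Module.Basis.equivFun_symm_apply]
        congr 1
        funext i
        rw [Int.cast_smul_eq_zsmul]
      rw [this, LinearEquiv.apply_symm_apply]
    have h1 : |(z i : ℝ)| ≤ ‖T‖ * K := by
      have h2 : ‖b.equivFun (∑ i, z i • b i) i‖ ≤ ‖b.equivFun (∑ i, z i • b i)‖ :=
        norm_le_pi_norm _ i
      have h3 : ‖T (∑ i, z i • b i)‖ ≤ ‖T‖ * ‖(∑ i, z i • b i)‖ := T.le_opNorm _
      have h4 : T (∑ i, z i • b i) = b.equivFun (∑ i, z i • b i) := rfl
      rw [hveq] at h2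
      rw [h4, hveq] at h3
      calc |(z i : ℝ)| = ‖(fun i => (z i : ℝ)) i‖ := rfl
        _ ≤ ‖(fun i => (z i : ℝ))‖ := h2
        _ ≤ ‖T‖ * ‖(∑ i, z i • b i)‖ := h3
        _ ≤ ‖T‖ * K := by
            exact mul_le_mul_of_nonneg_left hv (norm_nonneg T)
    have h5 : |z i| ≤ M := by
      have : ((|z i| : ℤ) : ℝ) ≤ (M : ℝ) := by
        rw [Int.cast_abs]
        exact le_trans h1 (Int.le_ceil _)
      exact_mod_cast this
    exact abs_le.mp h5
  refine Set.Finite.subset (Set.Finite.image _ ?_) key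
  have : {z : Fin n → ℤ | ∀ i, z i ∈ Set.Icc (-M) M} = Set.pi Set.univ (fun _ => Set.Icc (-M) M) := by
    ext z
    simp only [Set.mem_setOf_eq, Set.mem_pi, Set.mem_univ, true_implies]
  rw [this]
  exact Set.Finite.pi fun i => Set.finite_Icc _ _

lemma mem_convexHull_filter {n : ℕ} (F : Finset (Fin n → ℝ)) (h : (Fin n → ℝ) →L[ℝ] ℝ) (M : ℝ)
    (hFM : ∀ f ∈ F, h f ≤ M) {q : Fin n → ℝ} (hq : q ∈ convexHull ℝ (F : Set (Fin n → ℝ)))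
    (hqM : h q = M) :
    q ∈ convexHull ℝ ((F.filter (fun f => h f = M) : Finset (Fin n → ℝ)) : Set (Fin n → ℝ)) := by
  classical
  rw [Finset.convexHull_eq] at hq
  obtain ⟨w, hw0, hw1, hwq⟩ := hq
  rw [Finset.centerMass_eq_of_sum_1 _ _ hw1] at hwq
  simp only [id_eq] at hwq
  have hhq : ∑ f ∈ F, w f * h f = M := by
    have h2 := congrArg h hwq
    rw [map_sum] at h2
    simp only [ContinuousLinearMap.map_smul, smul_eq_mul] at h2
    rw [h2, hqM]
  have hzero : ∀ f ∈ F, w f * (M - h f) = 0 := by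
    have hsum : ∑ f ∈ F, w f * (M - h f) = 0 := by
      have : ∑ f ∈ F, w f * (M - h f) = (∑ f ∈ F, w f * M) - ∑ f ∈ F, w f * h f := by
        rw [← Finset.sum_sub_distrib]; congr 1; funext f; ring
      rw [this, ← Finset.sum_mul, hw1, hhq]; ring
    intro f hf
    refine (Finset.sum_eq_zero_iff_of_nonneg ?_).mp hsum f hf
    intro i hi
    exact mul_nonneg (hw0 i hi) (sub_nonneg.mpr (hFM i hi))
  set F₁ := F.filter (fun f => h f = M) with hF₁
  have hsupp : ∀ f ∈ F, w f ≠ 0 → f ∈ F₁ := by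
    intro f hf hwf
    rcases mul_eq_zero.mp (hzero f hf) with h' | h'
    · exact absurd h' hwf
    · exact Finset.mem_filter.mpr ⟨hf, by linarith [sub_eq_zero.mp h']⟩
  have hw1' : ∑ f ∈ F₁, w f = 1 := by
    rw [← hw1]
    exact Finset.sum_subset (Finset.filter_subset _ _)
      (fun f hf hnf => by_contra fun hne => hnf (hsupp f hf hne))
  have hq' : ∑ f ∈ F₁, w f • f = q := by
    rw [← hwq]
    exact Finset.sum_subset (Finset.filter_subset _ _)
      (fun f hf hnf => by
        have : w f = 0 := by_contra fun hne => hnf (hsupp f hf hne)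
        simp [this])
  rw [← hq']
  have := Finset.centerMass_mem_convexHull (t := F₁) (w := w) (z := id)
    (fun f hf => hw0 f (Finset.filter_subset _ _ hf)) (by rw [hw1']; norm_num)
    (fun f hf => Finset.mem_coe.mpr hf)
  rw [Finset.centerMass_eq_of_sum_1 _ _ hw1'] at this; simpa only [id_eq] using this

lemma sub_mem_span_hull {n : ℕ} {S : Finset (Fin n → ℝ)} {p q : Fin n → ℝ}
    (hp : p ∈ convexHull ℝ (S : Set (Fin n → ℝ))) (hq : q ∈ convexHull ℝ (S : Set (Fin n → ℝ))) :
    p - q ∈ Submodule.span ℝ ((S : Set (Fin n → ℝ)) - (S : Set (Fin n → ℝ))) := by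
  obtain ⟨f₀, hf₀⟩ : S.Nonempty := by
    by_contra hS
    rw [Finset.not_nonempty_iff_eq_empty.mp hS] at hp
    simp at hp
  set W := Submodule.span ℝ ((S : Set (Fin n → ℝ)) - (S : Set (Fin n → ℝ)))
  have hsub : convexHull ℝ (S : Set (Fin n → ℝ)) ⊆ {v | v - f₀ ∈ W} := by
    apply convexHull_min
    · intro f hf
      exact Submodule.subset_span (Set.sub_mem_sub hf (Finset.mem_coe.mpr hf₀))
    · intro u hu v hv a b ha hb hab
      simp only [Set.mem_setOf_eq] at hu hv ⊢
      have h1 : a • (u - f₀) + b • (v - f₀) = a • u + b • v - (a • f₀ + b • f₀) := by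
        rw [smul_sub, smul_sub]; abel
      have h2 : a • f₀ + b • f₀ = f₀ := by rw [← add_smul, hab, one_smul]
      have h3 : a • u + b • v - f₀ = a • (u - f₀) + b • (v - f₀) := by rw [h1, h2]
      rw [h3]
      exact W.add_mem (W.smul_mem a hu) (W.smul_mem b hv)
  have hp' := hsub hp
  have hq' := hsub hq
  have : p - q = (p - f₀) - (q - f₀) := by abel
  rw [this]
  exact W.sub_mem hp' hq'

end AuxLemmas

set_option maxHeartbeats 2000000 in
theorem chromatic_number_parallelohedron_le (n : ℕ) (P : Set (Fin n → ℝ))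
    (hP : IsSymmPolytope n P)
    (b : Module.Basis (Fin n) ℝ (Fin n → ℝ)) (Λ : AddSubgroup (Fin n → ℝ))
    (hΛ : Λ = AddSubgroup.closure (Set.range b))
    (htile : TilesBy n P (Λ : Set (Fin n → ℝ))) :
    ∃ c : (Fin n → ℝ) → Fin (2 ^ n),
      ∀ x y : Fin n → ℝ, polyNorm n P (x - y) = 1 → c x ≠ c y := by
  classical
  obtain ⟨hconv, hsymm, F, hF⟩ := hP
  obtain ⟨hunion, hdisj⟩ := htile
  -- covering property
  have hcov : ∀ v : Fin n → ℝ, ∃ l, l ∈ Λ ∧ v - l ∈ P := by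
    intro v
    have hv : v ∈ ⋃ l ∈ (Λ : Set (Fin n → ℝ)), (l +ᵥ P) := by rw [hunion]; trivial
    simp only [Set.mem_iUnion] at hv
    obtain ⟨l, hl, hmem⟩ := hv
    rw [Set.mem_vadd_set_iff_neg_vadd_mem] at hmem
    refine ⟨l, hl, ?_⟩
    have h1 : -l +ᵥ v = v - l := by rw [vadd_eq_add, neg_add_eq_sub]
    rwa [h1] at hmem
  have hPne : P.Nonempty := by
    obtain ⟨l, _, hm⟩ := hcov 0
    exact ⟨_, hm⟩
  have h0P : (0 : Fin n → ℝ) ∈ P := by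
    obtain ⟨p, hp⟩ := hPne
    have := hconv hp (hsymm p hp) (by norm_num : (0:ℝ) ≤ 1/2) (by norm_num : (0:ℝ) ≤ 1/2)
      (by norm_num : (1/2 : ℝ) + 1/2 = 1)
    simpa using this
  have hPcomp : IsCompact P := by
    rw [hF]; exact Set.Finite.isCompact_convexHull ℝ (F.finite_toSet)
  have hPcl : IsClosed P := hPcomp.isClosed
  -- rephrase vadd sets
  have hvadd_mem : ∀ (l v : Fin n → ℝ), v ∈ (l +ᵥ P) ↔ v - l ∈ P := by
    intro l v
    rw [Set.mem_vadd_set_iff_neg_vadd_mem, vadd_eq_add, neg_add_eq_sub]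
  have hvadd_eq : ∀ l : Fin n → ℝ, (l +ᵥ P) = (Homeomorph.subRight l) ⁻¹' P := by
    intro l
    ext u
    rw [hvadd_mem, Set.mem_preimage, Homeomorph.subRight_apply]
  have hvadd_int : ∀ (l v : Fin n → ℝ), v ∈ interior (l +ᵥ P) ↔ v - l ∈ interior P := by
    intro l v
    rw [hvadd_eq, ← Homeomorph.preimage_interior, Set.mem_preimage, Homeomorph.subRight_apply]
  -- lattice representation
  have hΛrep : ∀ l, l ∈ Λ → ∃ z : Fin n → ℤ, l = ∑ i, z i • b i := by
    intro l hl; rw [hΛ] at hl; exact (lattice_mem_iff b l).mp hl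
  have hΛcnt : (Λ : Set (Fin n → ℝ)).Countable := by
    have hsub : (Λ : Set (Fin n → ℝ)) ⊆ Set.range (fun z : Fin n → ℤ => ∑ i, z i • b i) := by
      intro l hl
      obtain ⟨z, hz⟩ := hΛrep l hl
      exact ⟨z, hz.symm⟩
    exact (Set.countable_range _).mono hsub
  -- 0 is in the interior of P
  have hint0 : (0 : Fin n → ℝ) ∈ interior P := by
    have hne : (interior P).Nonempty := by
      have hcnt : Countable (Λ : Set (Fin n → ℝ)) := hΛcnt.to_subtype
      have hcl : ∀ l : (Λ : Set (Fin n → ℝ)), IsClosed ((Homeomorph.subRight (l : Fin n → ℝ)) ⁻¹' P) :=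
        fun l => hPcl.preimage (Homeomorph.continuous _)
      have hcover : (⋃ l : (Λ : Set (Fin n → ℝ)), (Homeomorph.subRight (l : Fin n → ℝ)) ⁻¹' P) = Set.univ := by
        rw [Set.eq_univ_iff_forall]
        intro v
        obtain ⟨l, hl, hm⟩ := hcov v
        refine Set.mem_iUnion.mpr ⟨⟨l, hl⟩, ?_⟩
        rw [Set.mem_preimage, Homeomorph.subRight_apply]
        exact hm
      obtain ⟨i, hi⟩ := nonempty_interior_of_iUnion_of_closed hcl hcover
      obtain ⟨v, hv⟩ := hi
      rw [← Homeomorph.preimage_interior] at hv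
      exact ⟨_, hv⟩
    obtain ⟨w, hw⟩ := hne
    have hwneg : -w ∈ interior P := by
      have hnegP : (Homeomorph.neg (Fin n → ℝ)) ⁻¹' P = P := by
        ext u
        rw [Set.mem_preimage, Homeomorph.coe_neg]
        constructor
        · intro h; have := hsymm _ h; rwa [neg_neg] at this
        · intro h; exact hsymm _ h
      have hkey : (Homeomorph.neg (Fin n → ℝ)) ⁻¹' interior P = interior P := by
        rw [Homeomorph.preimage_interior, hnegP]
      have : -w ∈ (Homeomorph.neg (Fin n → ℝ)) ⁻¹' interior P := by
        rw [Set.mem_preimage, Homeomorph.coe_neg, neg_neg]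
        exact hw
      rwa [hkey] at this
    have h0 : (0 : Fin n → ℝ) = (1/2 : ℝ) • w + (1/2 : ℝ) • (-w) := by
      rw [smul_neg]; abel
    rw [h0]
    exact (hconv.interior) hw hwneg (by norm_num) (by norm_num) (by norm_num)
  have hPnhds : P ∈ 𝓝 (0 : Fin n → ℝ) := mem_interior_iff_mem_nhds.mp hint0
  have habs : Absorbent ℝ P := absorbent_nhds_zero hPnhds
  -- gauge facts
  have hNadd : ∀ u v : Fin n → ℝ, gauge P (u + v) ≤ gauge P u + gauge P v := gauge_add_le hconv habs
  have hNneg : ∀ v : Fin n → ℝ, gauge P (-v) = gauge P v := gauge_neg hsymm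
  have hNsmul : ∀ (r : ℝ), 0 ≤ r → ∀ v : Fin n → ℝ, gauge P (r • v) = r * gauge P v :=
    fun r hr v => gauge_smul_of_nonneg hr v
  have hN0 : ∀ v : Fin n → ℝ, 0 ≤ gauge P v := gauge_nonneg
  have hmemN : ∀ v ∈ P, gauge P v ≤ 1 := fun v hv => gauge_le_one_of_mem hv
  have hNmem : ∀ v : Fin n → ℝ, gauge P v ≤ 1 → v ∈ P := by
    intro v hv
    have := (gauge_le_one_iff_mem_closure hconv hPnhds).mp hv
    rwa [hPcl.closure_eq] at this
  have hNint : ∀ v : Fin n → ℝ, gauge P v < 1 ↔ v ∈ interior P :=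
    fun v => gauge_lt_one_iff_mem_interior hconv hPnhds
  -- norm comparison
  obtain ⟨ρ₀, hρ₀⟩ := hPcomp.isBounded.subset_closedBall 0
  set ρ := max ρ₀ 1 with hρdef
  have hρpos : (0:ℝ) < ρ := lt_of_lt_of_le one_pos (le_max_right _ _)
  have hρ : P ⊆ Metric.closedBall 0 ρ :=
    hρ₀.trans (Metric.closedBall_subset_closedBall (le_max_left _ _))
  have hnormle : ∀ (v : Fin n → ℝ) (C : ℝ), gauge P v ≤ C → ‖v‖ ≤ C * ρ := by
    intro v C hv
    have h1 := le_gauge_of_subset_closedBall habs hρpos.le hρ (x := v)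
    rw [div_le_iff₀ hρpos] at h1
    calc ‖v‖ ≤ gauge P v * ρ := h1
      _ ≤ C * ρ := mul_le_mul_of_nonneg_right hv hρpos.le
  -- separation of lattice points
  have hsep : ∀ l, l ∈ Λ → l ≠ 0 → 2 ≤ gauge P l := by
    intro l hl hl0
    by_contra hlt
    push_neg at hlt
    have h1 : gauge P ((1/2 : ℝ) • l) < 1 := by
      rw [hNsmul (1/2) (by norm_num)]; linarith
    have h2 : gauge P ((1/2 : ℝ) • l - l) < 1 := by
      have heq : (1/2 : ℝ) • l - l = -((1/2 : ℝ) • l) := by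
        rw [show (1/2 : ℝ) • l - l = ((1/2 : ℝ) - 1) • l from by rw [sub_smul, one_smul]]
        rw [show (1/2 : ℝ) - 1 = -(1/2) from by norm_num, neg_smul]
      rw [heq, hNneg]; exact h1
    have hmem2 : (1/2 : ℝ) • l ∈ interior (l +ᵥ P) := (hvadd_int l _).mpr ((hNint _).mp h2)
    have hpair := hdisj (Λ.zero_mem) hl (Ne.symm hl0)
    have hcontra : (1/2:ℝ) • l ∈ interior ((0 : Fin n → ℝ) +ᵥ P) ∩ interior (l +ᵥ P) := by
      constructor
      · rw [zero_vadd]; exact (hNint _).mp h1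
      · exact hmem2
    rw [hpair] at hcontra
    exact hcontra
  -- finiteness of lattice points near a point
  have hfin : ∀ (w : Fin n → ℝ) (C : ℝ), {l : Fin n → ℝ | l ∈ Λ ∧ gauge P (w - l) ≤ C}.Finite := by
    intro w C
    apply Set.Finite.subset (lattice_finite b (‖w‖ + C * ρ))
    rintro l ⟨hl, hlC⟩
    refine ⟨hΛrep l hl, ?_⟩
    have h1 : ‖w - l‖ ≤ C * ρ := hnormle _ _ hlC
    have h2 : ‖l‖ ≤ ‖w‖ + ‖w - l‖ := by
      have heq : l = w - (w - l) := by abel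
      calc ‖l‖ = ‖w - (w - l)‖ := by rw [← heq]
        _ ≤ ‖w‖ + ‖w - l‖ := norm_sub_le _ _
    linarith
  -- choose a good direction g
  have hgexists : ∃ g : Fin n → ℝ, ∀ S : Finset (Fin n → ℝ), S ⊆ F →
      Submodule.span ℝ ((S : Set (Fin n → ℝ)) - (S : Set (Fin n → ℝ))) ≠ ⊤ →
      g ∉ Submodule.span ℝ ((S : Set (Fin n → ℝ)) - (S : Set (Fin n → ℝ))) := by
    by_contra hcon
    push_neg at hcon
    set Bad := F.powerset.filter (fun S : Finset (Fin n → ℝ) =>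
      Submodule.span ℝ ((S : Set (Fin n → ℝ)) - (S : Set (Fin n → ℝ))) ≠ ⊤) with hBad
    have hsub : (Set.univ : Set (Fin n → ℝ)) ⊆
        ⋃ S ∈ Bad, (Submodule.span ℝ ((S : Set (Fin n → ℝ)) - (S : Set (Fin n → ℝ))) :
          Set (Fin n → ℝ)) := by
      intro g _
      obtain ⟨S, hSF, hne, hg⟩ := hcon g
      exact Set.mem_biUnion (Finset.mem_filter.mpr ⟨Finset.mem_powerset.mpr hSF, hne⟩) hg
    have hvol : volume (Set.univ : Set (Fin n → ℝ)) = 0 := by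
      have h1 := (measure_mono hsub).trans (measure_biUnion_finset_le (μ := volume) Bad _)
      have h2 : ∀ S ∈ Bad, volume ((Submodule.span ℝ
          ((S : Set (Fin n → ℝ)) - (S : Set (Fin n → ℝ))) : Submodule ℝ (Fin n → ℝ)) :
          Set (Fin n → ℝ)) = 0 := by
        intro S hS
        exact MeasureTheory.Measure.addHaar_submodule volume _ (Finset.mem_filter.mp hS).2
      rw [Finset.sum_congr rfl h2] at h1
      simpa using h1
    have hpos : 0 < volume (Set.univ : Set (Fin n → ℝ)) :=
      IsOpen.measure_pos volume isOpen_univ ⟨0, trivial⟩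
    rw [hvol] at hpos
    exact lt_irrefl _ hpos
  obtain ⟨g, hg⟩ := hgexists
  -- key existence: along direction g we eventually enter the interior of some tile
  have hstep : ∀ (w : Fin n → ℝ) (η : ℝ), 0 < η →
      ∃ ε l, 0 < ε ∧ ε < η ∧ l ∈ Λ ∧ w + ε • g - l ∈ interior P := by
    intro w η hη
    by_contra hcon
    push_neg at hcon
    set ε₀ := min η 1 with hε₀def
    have hε₀pos : 0 < ε₀ := lt_min hη one_pos
    have hε₀le1 : ε₀ ≤ 1 := min_le_right _ _
    have hε₀leη : ε₀ ≤ η := min_le_left _ _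
    set C := 1 + gauge P g with hCdef
    set Tset := {l : Fin n → ℝ | l ∈ Λ ∧ gauge P (w - l) ≤ C} with hTdef
    have hTfin : Tset.Finite := hfin w C
    have hTcnt : Countable Tset := hTfin.countable.to_subtype
    have hbound : ∀ t : ℝ, 0 < t → t ≤ 1 → ∀ l, l ∈ Λ → w + t • g - l ∈ P → l ∈ Tset := by
      intro t ht ht1 l hl hm
      refine ⟨hl, ?_⟩
      have h1 : gauge P (w + t • g - l) ≤ 1 := hmemN _ hm
      have h2 : gauge P (w - l) ≤ gauge P (w + t • g - l) + gauge P (-(t • g)) := by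
        have heq : w - l = (w + t • g - l) + (-(t • g)) := by abel
        rw [heq]; exact hNadd _ _
      rw [hNneg, hNsmul t ht.le] at h2
      have h3 : t * gauge P g ≤ gauge P g := by nlinarith [hN0 g]
      rw [hCdef]; linarith
    set fam : Tset ⊕ Bool → Set ℝ := fun i =>
      Sum.rec (fun l => {t : ℝ | w + t • g - (l : Fin n → ℝ) ∈ P})
        (fun bb => cond bb (Set.Iic (ε₀/3)) (Set.Ici (ε₀/2))) i with hfam
    have hclosed : ∀ i, IsClosed (fam i) := by
      rintro (l | bb)
      · have hcont : Continuous (fun t : ℝ => w + t • g - (l : Fin n → ℝ)) := by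
          apply Continuous.sub _ continuous_const
          exact continuous_const.add (continuous_id.smul continuous_const)
        exact hPcl.preimage hcont
      · cases bb
        · exact isClosed_Ici
        · exact isClosed_Iic
    have hcover : (⋃ i, fam i) = Set.univ := by
      rw [Set.eq_univ_iff_forall]
      intro t
      rcases le_or_gt t (ε₀/3) with h | h
      · exact Set.mem_iUnion.mpr ⟨Sum.inr true, h⟩
      rcases le_or_gt (ε₀/2) t with h' | h'
      · exact Set.mem_iUnion.mpr ⟨Sum.inr false, h'⟩
      · have ht0 : 0 < t := lt_trans (by positivity) h
        have ht1 : t ≤ 1 := le_trans h'.le (by linarith)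
        obtain ⟨l, hl, hm⟩ := hcov (w + t • g)
        exact Set.mem_iUnion.mpr ⟨Sum.inl ⟨l, hbound t ht0 ht1 l hl hm⟩, hm⟩
    have hdense := dense_iUnion_interior_of_closed hclosed hcover
    obtain ⟨t₀, ht₀, ht₀mem⟩ := hdense.exists_mem_open isOpen_Ioo
      (Set.nonempty_Ioo.mpr (by linarith : ε₀/3 < ε₀/2))
    obtain ⟨hta, htb⟩ := ht₀mem
    obtain ⟨i, hti⟩ := Set.mem_iUnion.mp ht₀
    rcases i with l | bb
    swap
    · cases bb
      · -- Ici (ε₀/2)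
        have : t₀ ∈ Set.Ioi (ε₀/2) := by
          have h1 : interior (fam (Sum.inr false)) = Set.Ioi (ε₀/2) := by
            show interior (Set.Ici (ε₀/2)) = _
            exact interior_Ici
          rwa [h1] at hti
        exact absurd this (by simp [Set.mem_Ioi]; linarith)
      · -- Iic (ε₀/3)
        have : t₀ ∈ Set.Iio (ε₀/3) := by
          have h1 : interior (fam (Sum.inr true)) = Set.Iio (ε₀/3) := by
            show interior (Set.Iic (ε₀/3)) = _
            exact interior_Iic
          rwa [h1] at hti
        exact absurd this (by simp [Set.mem_Iio]; linarith)
    · -- main case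
      have hmemnhds : (fam (Sum.inl l)) ∈ 𝓝 t₀ := mem_interior_iff_mem_nhds.mp hti
      obtain ⟨δ, hδpos, hδ⟩ := Metric.mem_nhds_iff.mp hmemnhds
      set δ' := δ/2 with hδ'def
      have hδ'pos : 0 < δ' := by positivity
      have hin : ∀ s : ℝ, |s| ≤ δ' → w + (t₀ + s) • g - (l : Fin n → ℝ) ∈ P := by
        intro s hs
        have : t₀ + s ∈ Metric.ball t₀ δ := by
          rw [Metric.mem_ball, Real.dist_eq]
          have heq : t₀ + s - t₀ = s := by ring
          rw [heq]
          linarith [hs]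
        exact hδ this
      set p := w + t₀ • g - (l : Fin n → ℝ) with hpdef
      have hpP : p ∈ P := by
        have := hin 0 (by simp [hδ'pos.le])
        simpa using this
      have hpA : p + δ' • g ∈ P := by
        have := hin δ' (by rw [abs_of_pos hδ'pos])
        have heq : w + (t₀ + δ') • g - (l : Fin n → ℝ) = p + δ' • g := by
          rw [hpdef, add_smul]; abel
        rwa [heq] at this
      have hpB : p - δ' • g ∈ P := by
        have := hin (-δ') (by rw [abs_neg, abs_of_pos hδ'pos])
        have heq : w + (t₀ + -δ') • g - (l : Fin n → ℝ) = p - δ' • g := by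
          rw [hpdef, add_smul, neg_smul]; abel
        rwa [heq] at this
      have hpni : p ∉ interior P := by
        apply hcon t₀ l (by linarith) (by linarith)
        exact l.2.1
      obtain ⟨h, hh⟩ := geometric_hahn_banach_open_point (hconv.interior) isOpen_interior hpni
      have hle : ∀ q ∈ P, h q ≤ h p := by
        intro q hq
        by_contra hqp
        push_neg at hqp
        have hp0 : 0 < h p := by
          have := hh 0 hint0
          simpa using this
        have hq0 : 0 < h q := lt_trans hp0 hqp
        set t := (h q - h p) / (2 * h q) with htdef
        have ht1 : 0 < t := div_pos (by linarith) (by linarith)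
        have ht2 : t ≤ 1 := by
          rw [div_le_one (by linarith)]; linarith
        have hmemi : q + t • ((0 : Fin n → ℝ) - q) ∈ interior P :=
          hconv.add_smul_sub_mem_interior hq hint0 ⟨ht1, ht2⟩
        have hlt := hh _ hmemi
        have hcalc : h (q + t • ((0 : Fin n → ℝ) - q)) = (1 - t) * h q := by
          rw [h.map_add, h.map_smul, h.map_sub, h.map_zero]
          simp only [smul_eq_mul]
          ring
        rw [hcalc] at hlt
        have hval : (1 - t) * h q = (h q + h p) / 2 := by
          rw [htdef]
          field_simp
          ring
        rw [hval] at hlt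
        linarith
      have hg0 : h g = 0 := by
        have h1 := hle _ hpA
        have h2 := hle _ hpB
        rw [h.map_add, h.map_smul] at h1
        rw [h.map_sub, h.map_smul] at h2
        simp only [smul_eq_mul] at h1 h2
        nlinarith
      have hMpos : 0 < h p := by
        have := hh 0 hint0
        simpa using this
      have hFP : (F : Set (Fin n → ℝ)) ⊆ P := by
        rw [hF]; exact subset_convexHull ℝ _
      have hfM : ∀ f ∈ F, h f ≤ h p := fun f hf => hle f (hFP hf)
      set F₁ := F.filter (fun f => h f = h p) with hF₁def
      have hp1 : p + δ' • g ∈ convexHull ℝ (F₁ : Set (Fin n → ℝ)) := by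
        apply mem_convexHull_filter F h (h p) hfM
        · rw [← hF]; exact hpA
        · rw [h.map_add, h.map_smul, hg0]; simp
      have hp2 : p - δ' • g ∈ convexHull ℝ (F₁ : Set (Fin n → ℝ)) := by
        apply mem_convexHull_filter F h (h p) hfM
        · rw [← hF]; exact hpB
        · rw [h.map_sub, h.map_smul, hg0]; simp
      have hspan := sub_mem_span_hull hp1 hp2
      have heq2 : (p + δ' • g) - (p - δ' • g) = (2 * δ') • g := by
        rw [two_mul, add_smul]; abel
      rw [heq2] at hspan
      have hgspan : g ∈ Submodule.span ℝ ((F₁ : Set (Fin n → ℝ)) - (F₁ : Set (Fin n → ℝ))) := by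
        have hsm := Submodule.smul_mem _ ((2*δ')⁻¹) hspan
        rwa [smul_smul, inv_mul_cancel₀ (by positivity), one_smul] at hsm
      have hne : Submodule.span ℝ ((F₁ : Set (Fin n → ℝ)) - (F₁ : Set (Fin n → ℝ))) ≠ ⊤ := by
        intro htop
        have hker : Submodule.span ℝ ((F₁ : Set (Fin n → ℝ)) - (F₁ : Set (Fin n → ℝ))) ≤
            LinearMap.ker (h : (Fin n → ℝ) →ₗ[ℝ] ℝ) := by
          rw [Submodule.span_le]
          rintro v ⟨f1, hf1, f2, hf2, rfl⟩
          have e1 : h f1 = h p := (Finset.mem_filter.mp hf1).2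
          have e2 : h f2 = h p := (Finset.mem_filter.mp hf2).2
          simp only [SetLike.mem_coe, LinearMap.mem_ker]
          show h (f1 - f2) = 0
          rw [h.map_sub, e1, e2, sub_self]
        rw [htop, top_le_iff] at hker
        have hp0 : h p = 0 := by
          have hmem : p ∈ LinearMap.ker (h : (Fin n → ℝ) →ₗ[ℝ] ℝ) := by
            rw [hker]; trivial
          simpa using hmem
        linarith
      exact hg F₁ (Finset.filter_subset _ _) hne hgspan
  -- existence of representative with half-open condition
  have hD : ∀ w : Fin n → ℝ, ∃ l, l ∈ Λ ∧ gauge P (w - l) ≤ 1 ∧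
      ∃ ε : ℝ, 0 < ε ∧ (w - l) + ε • g ∈ interior P := by
    intro w
    have hstep' : ∀ k : ℕ, ∃ ε l, 0 < ε ∧ ε < 1/(k+1 : ℝ) ∧ l ∈ Λ ∧
        w + ε • g - l ∈ interior P :=
      fun k => hstep w (1/(k+1 : ℝ)) (by positivity)
    choose ε l hε0 hεlt hlΛ hlint using hstep'
    have hbnd : ∀ k, gauge P (w - l k) ≤ 1 + ε k * gauge P g := by
      intro k
      have h1 : gauge P (w + ε k • g - l k) ≤ 1 := hmemN _ (interior_subset (hlint k))
      have h2 : gauge P (w - l k) ≤ gauge P (w + ε k • g - l k) + gauge P (-(ε k • g)) := by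
        have heq : w - l k = (w + ε k • g - l k) + (-(ε k • g)) := by abel
        rw [heq]; exact hNadd _ _
      rw [hNneg, hNsmul _ (hε0 k).le] at h2
      linarith
    set C := 1 + gauge P g with hCdef
    have hmemT : ∀ k, l k ∈ {l : Fin n → ℝ | l ∈ Λ ∧ gauge P (w - l) ≤ C} := by
      intro k
      refine ⟨hlΛ k, ?_⟩
      have h3 : ε k ≤ 1 := by
        have h4 := hεlt k
        have hk : 1/(k+1 : ℝ) ≤ 1 := by
          rw [div_le_one (by positivity)]
          linarith [Nat.cast_nonneg (α := ℝ) k]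
        linarith
      have := hbnd k
      rw [hCdef]
      nlinarith [hN0 g]
    have hTfin : {l : Fin n → ℝ | l ∈ Λ ∧ gauge P (w - l) ≤ C}.Finite := hfin w C
    have hTfin' : Finite ↥{l : Fin n → ℝ | l ∈ Λ ∧ gauge P (w - l) ≤ C} := hTfin.to_subtype
    obtain ⟨l₀, hl₀⟩ := Finite.exists_infinite_fiber
      (fun k : ℕ => (⟨l k, hmemT k⟩ : ↥{l : Fin n → ℝ | l ∈ Λ ∧ gauge P (w - l) ≤ C}))
    have hfib : {k : ℕ | l k = (l₀ : Fin n → ℝ)}.Infinite := by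
      have h1 : ((fun k : ℕ => (⟨l k, hmemT k⟩ :
          ↥{l : Fin n → ℝ | l ∈ Λ ∧ gauge P (w - l) ≤ C})) ⁻¹' {l₀}).Infinite :=
        Set.infinite_coe_iff.mp hl₀
      apply Set.Infinite.mono _ h1
      intro k hk
      simp only [Set.mem_preimage, Set.mem_singleton_iff] at hk
      exact congrArg Subtype.val hk
    obtain ⟨k₀, hk₀⟩ := hfib.nonempty
    refine ⟨l₀, (l₀ : ↥{l : Fin n → ℝ | l ∈ Λ ∧ gauge P (w - l) ≤ C}).2.1, ?_, ε k₀, hε0 k₀, ?_⟩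
    · refine le_of_forall_pos_le_add ?_
      intro δ hδ
      obtain ⟨K, hK⟩ := exists_nat_gt ((gauge P g) / δ)
      obtain ⟨k, hkfib, hkK⟩ := hfib.exists_gt K
      have h1 : gauge P (w - l k) ≤ 1 + ε k * gauge P g := hbnd k
      rw [hkfib] at h1
      have h2 : ε k * gauge P g ≤ (1/(k+1 : ℝ)) * gauge P g :=
        mul_le_mul_of_nonneg_right (hεlt k).le (hN0 g)
      have h3 : (1/(k+1 : ℝ)) * gauge P g < δ := by
        rw [div_mul_eq_mul_div, one_mul, div_lt_iff₀ (by positivity)]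
        have hKk : (K : ℝ) < (k : ℝ) := by exact_mod_cast hkK
        have h5 : gauge P g < δ * K := by
          rw [div_lt_iff₀ hδ] at hK
          linarith
        have h6 : δ * (K : ℝ) ≤ δ * (k + 1) := by
          apply mul_le_mul_of_nonneg_left _ hδ.le
          linarith
        linarith
      linarith
    · have hmem := hlint k₀
      rw [hk₀] at hmem
      have heq : w + ε k₀ • g - (l₀ : Fin n → ℝ) = (w - l₀) + ε k₀ • g := by abel
      rwa [heq] at hmem
  -- the coloring
  choose R hRΛ hRle hRε using hD
  have hzrep : ∀ w : Fin n → ℝ, ∃ z : Fin n → ℤ, R w = ∑ i, z i • b i :=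
    fun w => hΛrep _ (hRΛ w)
  choose Z hZ using hzrep
  have hcard : Fintype.card (Fin n → ZMod 2) = 2 ^ n := by
    rw [Fintype.card_fun, ZMod.card, Fintype.card_fin]
  refine ⟨fun x => (Fintype.equivFinOfCardEq hcard)
    (fun i => ((Z ((2:ℝ) • x) i : ℤ) : ZMod 2)), ?_⟩
  intro x y hxy hceq
  rw [polyNorm_eq_gauge h0P] at hxy
  set x' := (2:ℝ) • x with hx'def
  set y' := (2:ℝ) • y with hy'def
  have hinj := (Fintype.equivFinOfCardEq hcard).injective hceq
  have hcomp : ∀ i, ((Z x' i : ℤ) : ZMod 2) = ((Z y' i : ℤ) : ZMod 2) :=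
    fun i => congrFun hinj i
  have hdvd : ∀ i, ∃ m : ℤ, Z x' i - Z y' i = 2 * m := by
    intro i
    have hmod := (ZMod.intCast_eq_intCast_iff _ _ _).mp (hcomp i)
    obtain ⟨m, hm⟩ := Int.ModEq.dvd hmod
    exact ⟨-m, by omega⟩
  choose m hm using hdvd
  set μ := ∑ i, m i • b i with hμdef
  have hμΛ : μ ∈ Λ := by
    rw [hΛ]
    exact (lattice_mem_iff b μ).mpr ⟨m, rfl⟩
  have hRdiff : R x' - R y' = (2:ℤ) • μ := by
    rw [hZ x', hZ y', ← Finset.sum_sub_distrib, hμdef, Finset.smul_sum]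
    congr 1
    funext i
    rw [← sub_smul, hm i, mul_smul]
  -- strict bound on the difference of the two residues
  have hstrict : gauge P ((x' - R x') - (y' - R y')) < 2 := by
    obtain ⟨εa, hεa, hA⟩ := hRε x'
    obtain ⟨εc, hεc, hC⟩ := hRε y'
    set a := x' - R x' with hadef
    set c' := y' - R y' with hcdef
    set εm := min εa εc with hεmdef
    have hεmpos : 0 < εm := lt_min hεa hεc
    have hseg : ∀ (u : Fin n → ℝ) (εu : ℝ), 0 < εu → εm ≤ εu → u ∈ P →
        u + εu • g ∈ interior P → u + εm • g ∈ interior P := by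
      intro u εu hεu hle' huP huint
      have ht : εm / εu ∈ Set.Ioc (0:ℝ) 1 :=
        ⟨by positivity, by rw [div_le_one hεu]; exact hle'⟩
      have hmem := hconv.add_smul_mem_interior huP huint ht
      have heq : u + (εm/εu) • (εu • g) = u + εm • g := by
        rw [smul_smul, div_mul_cancel₀ _ (ne_of_gt hεu)]
      rwa [heq] at hmem
    have hAε : a + εm • g ∈ interior P :=
      hseg a εa hεa (min_le_left _ _) (hNmem _ (hRle x')) hA
    have hCε : c' + εm • g ∈ interior P :=
      hseg c' εc hεc (min_le_right _ _) (hNmem _ (hRle y')) hC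
    have h1 : gauge P (a + εm • g) < 1 := (hNint _).mpr hAε
    have h2 : gauge P (c' + εm • g) < 1 := (hNint _).mpr hCε
    have heq : a - c' = (a + εm • g) + (-(c' + εm • g)) := by abel
    calc gauge P (a - c') ≤ gauge P (a + εm • g) + gauge P (-(c' + εm • g)) := by
          rw [heq]; exact hNadd _ _
      _ = gauge P (a + εm • g) + gauge P (c' + εm • g) := by rw [hNneg]
      _ < 2 := by linarith
  have h2N : gauge P (x' - y') = 2 := by
    have heq : x' - y' = (2:ℝ) • (x - y) := by
      rw [hx'def, hy'def, smul_sub]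
    rw [heq, hNsmul 2 (by norm_num), hxy]
    norm_num
  have hdecomp : x' - y' = (2:ℤ) • μ + ((x' - R x') - (y' - R y')) := by
    have heq : x' - y' = (R x' - R y') + ((x' - R x') - (y' - R y')) := by abel
    rw [heq, hRdiff]
  rcases eq_or_ne μ 0 with hμ0 | hμ0
  · rw [hμ0, smul_zero, zero_add] at hdecomp
    rw [hdecomp] at h2N
    linarith
  · have h4 : 2 ≤ gauge P μ := hsep μ hμΛ hμ0
    have hz2 : ((2:ℤ) • μ : Fin n → ℝ) = (2:ℝ) • μ := by
      rw [← Int.cast_smul_eq_zsmul ℝ]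
      norm_num
    have h5 : gauge P ((2:ℤ) • μ) = 2 * gauge P μ := by
      rw [hz2, hNsmul 2 (by norm_num)]
    have h6 : gauge P ((2:ℤ) • μ) ≤ gauge P (x' - y') +
        gauge P (-((x' - R x') - (y' - R y'))) := by
      have heq : ((2:ℤ) • μ : Fin n → ℝ) = (x' - y') + (-((x' - R x') - (y' - R y'))) := by
        rw [hdecomp]; abel
      rw [heq]; exact hNadd _ _
    rw [hNneg] at h6
    linarith
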